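/- Let (E, C) be a finitely separated graph and let v be a branching vertex that admits a local orientation of type (1), i.e. there is X_v ∈ C_v such that every base-simple closed path α based at v has initial symbol in X_v⁻¹ or terminal symbol in X_v. Then every closed path α based at v (not necessarily base-simple) satisfies: the initial symbol of α lies in X_v⁻¹ or the terminal symbol of α lies in X_v. -/

import Mathlib

namespace SepGraphStmt

/-- A finitely separated graph: a directed graph with a colouring of the edges
such that edges of the same colour have the same range, and each colour class is finite.
(The colour classes with range `v` form the partition `C_v` of `r⁻¹(v)`.) -/
structure SepGraph (V E Λ : Type) where
  r : E → V
  s : E → V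
  col : E → Λ
  col_range : ∀ e f, col e = col f → r e = r f
  col_finite : ∀ l : Λ, {e : E | col e = l}.Finite

variable {V E Λ : Type}

/-- A letter of the double graph: an edge together with a direction
(`true` = the edge itself, `false` = its formal inverse). -/
abbrev Letter (E : Type) := E × Bool

def src (G : SepGraph V E Λ) (a : Letter E) : V :=
  if a.2 then G.s a.1 else G.r a.1

def rng (G : SepGraph V E Λ) (a : Letter E) : V :=
  if a.2 then G.r a.1 else G.s a.1

/-- Letter `b` may follow letter `a` in an admissible path
(words are written in application order: the first letter of a list is traversed first). -/
def ok (G : SepGraph V E Λ) (a b : Letter E) : Prop :=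
  src G b = rng G a ∧
    (a.2 = false → b.2 = true → b.1 ≠ a.1) ∧
    (a.2 = true → b.2 = false → G.col b.1 ≠ G.col a.1)

def Admissible (G : SepGraph V E Λ) (w : List (Letter E)) : Prop :=
  List.Chain' (ok G) w

/-- Formal inverse of a word. -/
def wInv (w : List (Letter E)) : List (Letter E) :=
  (w.map fun a => (a.1, !a.2)).reverse

/-- The source of the (nonempty) word is `v`. -/
def headIs (G : SepGraph V E Λ) (w : List (Letter E)) (v : V) : Prop :=
  ∀ a ∈ w.head?, src G a = v

/-- The range of the (nonempty) word is `v`. -/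
def lastIs (G : SepGraph V E Λ) (w : List (Letter E)) (v : V) : Prop :=
  ∀ a ∈ w.getLast?, rng G a = v

/-- `w` is an admissible path from `u` to `v`. -/
def IsPath (G : SepGraph V E Λ) (w : List (Letter E)) (u v : V) : Prop :=
  Admissible G w ∧ (w = [] → u = v) ∧ headIs G w u ∧ lastIs G w v

/-- `w` is a closed path based at `v`. -/
def IsClosed (G : SepGraph V E Λ) (w : List (Letter E)) (v : V) : Prop :=
  w ≠ [] ∧ Admissible G w ∧ headIs G w v ∧ lastIs G w v

/-- `w` is a cycle: a nontrivial path whose square is admissible. -/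
def IsCycle (G : SepGraph V E Λ) (w : List (Letter E)) : Prop :=
  w ≠ [] ∧ Admissible G (w ++ w)

/-- `w` is a cycle based at `v`. -/
def CycleAt (G : SepGraph V E Λ) (w : List (Letter E)) (v : V) : Prop :=
  IsCycle G w ∧ headIs G w v

/-- A nontrivial admissible path `w` allows a return: some `βw` is a closed path. -/
def AllowsReturn (G : SepGraph V E Λ) (w : List (Letter E)) : Prop :=
  w ≠ [] ∧ Admissible G w ∧ ∃ b u, IsClosed G (w ++ b) u

/-- A "returning item" at `v`: either an edge in `s⁻¹(v)` allowing a return,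
or a colour class `X ∈ C_v` allowing a return. -/
def RetItem (G : SepGraph V E Λ) (v : V) : E ⊕ Λ → Prop
  | Sum.inl e => G.s e = v ∧ AllowsReturn G [(e, true)]
  | Sum.inr l => ∃ e, G.col e = l ∧ G.r e = v ∧ AllowsReturn G [(e, false)]

/-- `v` is a branching vertex. -/
def Branching (G : SepGraph V E Λ) (v : V) : Prop :=
  ∃ x y z : E ⊕ Λ, x ≠ y ∧ x ≠ z ∧ y ≠ z ∧
    RetItem G v x ∧ RetItem G v y ∧ RetItem G v z

/-- The relation `u ⊸ v`: there is an admissible path `α : u → v` and a cycle `β`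
based at `v` such that `α⁻¹βα` is admissible. -/
def Multimap (G : SepGraph V E Λ) (u v : V) : Prop :=
  ∃ α β, IsPath G α u v ∧ CycleAt G β v ∧ Admissible G (α ++ β ++ wInv α)

/-- A word is positively oriented w.r.t. an orientation `o`. -/
def Pos (o : E → Bool) (w : List (Letter E)) : Prop := ∀ a ∈ w, a.2 = o a.1

/-- A word is negatively oriented w.r.t. an orientation `o`. -/
def Neg (o : E → Bool) (w : List (Letter E)) : Prop := ∀ a ∈ w, a.2 = !o a.1

/-- `o` is an orientation at `v` (Definition of orientation, with (2')). -/
def OrientAt (G : SepGraph V E Λ) (o : E → Bool) (v : V) : Prop :=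
  ((∃ l : Λ, (∃ e, G.col e = l) ∧ (∀ e, (G.r e = v ∧ o e = false) ↔ G.col e = l)) ∧
    ∀ e, G.s e = v → o e = false) ∨
  ((∀ e, G.r e = v → o e = true) ∧
    ∀ e f, G.s e = v → G.s f = v → o e = true → o f = true → e = f)

/-- `o` is a proper orientation at `v`. -/
def ProperOrientAt (G : SepGraph V E Λ) (o : E → Bool) (v : V) : Prop :=
  ((∃ l : Λ, (∃ e, G.col e = l) ∧ (∀ e, (G.r e = v ∧ o e = false) ↔ G.col e = l)) ∧
    ∀ e, G.s e = v → o e = false) ∨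
  ((∀ e, G.r e = v → o e = true) ∧ ∃! e, G.s e = v ∧ o e = true)

/-- `w` is a base-simple closed path at `v`. -/
def BaseSimple (G : SepGraph V E Λ) (w : List (Letter E)) (v : V) : Prop :=
  IsClosed G w v ∧
    ∀ p, p ≠ [] → p.length < w.length → p <+: w → ¬ lastIs G p v


/-- If a branching vertex `v` admits a local orientation of type (1)
witnessed by `X ∈ C_v` on base-simple closed paths, then every closed path based at `v`
has initial symbol in `X⁻¹` or terminal symbol in `X`. -/
theorem stmt13 {V E Λ : Type} (G : SepGraph V E Λ) (v : V) (hv : Branching G v)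
    (X : Λ) (hX : ∃ e, G.col e = X ∧ G.r e = v)
    (hbs : ∀ w : List (Letter E), BaseSimple G w v →
      (∃ e, w.head? = some (e, false) ∧ G.col e = X) ∨
      (∃ e, w.getLast? = some (e, true) ∧ G.col e = X)) :
    ∀ w : List (Letter E), IsClosed G w v →
      (∃ e, w.head? = some (e, false) ∧ G.col e = X) ∨
      (∃ e, w.getLast? = some (e, true) ∧ G.col e = X) := by

  have key : ∀ n, ∀ w : List (Letter E), w.length < n → IsClosed G w v →
      (∃ e, w.head? = some (e, false) ∧ G.col e = X) ∨
      (∃ e, w.getLast? = some (e, true) ∧ G.col e = X) := by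
    intro n
    induction n with
    | zero => intro w hw; omega
    | succ n ih =>
      intro w hwlen hw
      by_cases hbsimp : ∀ p, p ≠ [] → p.length < w.length → p <+: w → ¬ lastIs G p v
      · exact hbs w ⟨hw, hbsimp⟩
      · push_neg at hbsimp
        obtain ⟨p, hpne, hplt, hppre, hplast⟩ := hbsimp
        obtain ⟨q, rfl⟩ := hppre
        have hqne : q ≠ [] := by
          intro h; subst h; simp at hplt
        obtain ⟨hwne, hadm, hhead, hlast⟩ := hw
        rw [Admissible, List.Chain', List.isChain_append] at hadm
        obtain ⟨hadp, hadq, hjun⟩ := hadm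
        -- head? and getLast? facts
        have hhead_eq : (p ++ q).head? = p.head? := by
          cases p with
          | nil => exact absurd rfl hpne
          | cons a t => simp
        have hlast_eq : (p ++ q).getLast? = q.getLast? := by
          rw [List.getLast?_append_of_ne_nil _ hqne]
        -- p is closed at v
        have hpc : IsClosed G p v := by
          refine ⟨hpne, hadp, ?_, hplast⟩
          intro a ha
          exact hhead _ (by rw [hhead_eq]; exact ha)
        -- q is closed at v
        have hqc : IsClosed G q v := by
          refine ⟨hqne, hadq, ?_, ?_⟩
          · intro b hb
            have hx : p.getLast? = some (p.getLast hpne) := List.getLast?_eq_getLast hpne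
            have hok := hjun _ hx _ hb
            have := hplast _ hx
            rw [hok.1, this]
          · intro b hb
            exact hlast _ (by rw [hlast_eq]; exact hb)
        have hplen : p.length < n := by
          simp [List.length_append] at hwlen hplt ⊢
          omega
        have hqlen : q.length < n := by
          have : 0 < p.length := List.length_pos_iff.mpr hpne
          simp [List.length_append] at hwlen
          omega
        rcases ih p hplen hpc with hl | ⟨e, he1, he2⟩
        · left
          obtain ⟨e, he1, he2⟩ := hl
          exact ⟨e, by rw [hhead_eq]; exact he1, he2⟩
        rcases ih q hqlen hqc with ⟨f, hf1, hf2⟩ | hr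
        · exfalso
          have hok := hjun _ he1 _ hf1
          exact hok.2.2 rfl rfl (hf2.trans he2.symm)
        · right
          obtain ⟨f, hf1, hf2⟩ := hr
          exact ⟨f, by rw [hlast_eq]; exact hf1, hf2⟩
  intro w hw
  exact key (w.length + 1) w (by omega) hw


end SepGraphStmt
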